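/- Let m ≥ 5 be odd, h = (m-1)/2, n = q^m - 1. Let a = a_{h+1} q^{h+1} + a_1 q + a_0 with 1 ≤ a_1, a_{h+1} ≤ q-1, 1 ≤ a_0 ≤ q-1 (all other q-adic digits zero). Then a is the coset leader of its q-cyclotomic coset modulo n if and only if a_{h+1} ≤ a_1. -/

import Mathlib

/-- The q-cyclotomic coset of a modulo n: {a * q^j mod n : j ≥ 0}. -/
def cyclCoset (q n a : ℕ) : Finset ℕ :=
  (Finset.range n).image (fun j => a * q ^ j % n)

/-- a is the coset leader (smallest element) of its q-cyclotomic coset modulo n. -/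
def IsCosetLeader (q n a : ℕ) : Prop :=
  ∀ j : ℕ, a ≤ a * q ^ j % n

lemma st4_L1 (q Q ah1 a1 a0 : ℕ) (hq : 2 ≤ q) (hQ : q * q ≤ Q)
    (h1 : a1 < q) (hh : ah1 < q) (h0 : a0 < q) :
    ah1 * (Q * q) + a1 * q + a0 + Q ≤ Q * q * q := by
  have hqQ : q ≤ Q := le_trans (Nat.le_mul_of_pos_left q (by omega)) hQ
  zify at *
  nlinarith [mul_nonneg (by linarith : (0:ℤ) ≤ (q:ℤ) - 1 - ah1) (by positivity : (0:ℤ) ≤ (Q:ℤ) * q),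
    mul_nonneg (by linarith : (0:ℤ) ≤ (q:ℤ) - 1 - a1) (by positivity : (0:ℤ) ≤ (q:ℤ)),
    mul_nonneg (by positivity : (0:ℤ) ≤ (Q:ℤ)) (by linarith : (0:ℤ) ≤ (q:ℤ) - 2)]

lemma st4_L2 (q Q ah1 a1 a0 : ℕ) (hq : 2 ≤ q) (hQ : q * q ≤ Q)
    (h1 : a1 < q) (hh : ah1 < q) (h0 : a0 < q) :
    ah1 + (a1 * (Q * q) + a0 * Q) + 2 ≤ Q * Q * q := by
  have hqQ : q ≤ Q := le_trans (Nat.le_mul_of_pos_left q (by omega)) hQ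
  zify at *
  nlinarith [mul_nonneg (by linarith : (0:ℤ) ≤ (q:ℤ) - 1 - a1) (by positivity : (0:ℤ) ≤ (Q:ℤ) * q),
    mul_nonneg (by linarith : (0:ℤ) ≤ (q:ℤ) - 1 - a0) (by positivity : (0:ℤ) ≤ (Q:ℤ)),
    mul_nonneg (by positivity : (0:ℤ) ≤ (Q:ℤ) * q) (by linarith : (0:ℤ) ≤ (Q:ℤ) - q),
    mul_nonneg (by positivity : (0:ℤ) ≤ (q:ℤ)) (by linarith : (0:ℤ) ≤ (q:ℤ) - 2)]

lemma st4_L3 (q Q ah1 a1 a0 : ℕ) (hq : 2 ≤ q) (hQ : q * q ≤ Q)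
    (hh : ah1 < q) (h0 : 1 ≤ a0) (hle : ah1 ≤ a1) :
    ah1 * (Q * q) + a1 * q + a0 ≤ ah1 + (a1 * (Q * q) + a0 * Q) := by
  have hqQ : q ≤ Q := le_trans (Nat.le_mul_of_pos_left q (by omega)) hQ
  zify at *
  nlinarith [mul_nonneg (by linarith : (0:ℤ) ≤ (a1:ℤ) - ah1) (by nlinarith : (0:ℤ) ≤ (Q:ℤ) * q - q),
    mul_nonneg (by linarith : (0:ℤ) ≤ (a0:ℤ) - 1) (by linarith : (0:ℤ) ≤ (Q:ℤ) - 1),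
    mul_nonneg (by linarith : (0:ℤ) ≤ (q:ℤ) - 1 - ah1) (by linarith : (0:ℤ) ≤ (q:ℤ) - 1)]

lemma st4_L4 (q Q ah1 a1 a0 : ℕ) (hq : 2 ≤ q) (hQ : q * q ≤ Q)
    (h1 : a1 < q) (hh : ah1 < q) (h0 : a0 < q) (hgt : a1 < ah1) :
    ah1 + (a1 * (Q * q) + a0 * Q) < ah1 * (Q * q) + a1 * q + a0 := by
  nlinarith [Nat.mul_le_mul_right (Q * q) hgt]

lemma st4_L5 (q Q a R : ℕ) (hq : 2 ≤ q) (hQ : q * q ≤ Q) (hR : 1 ≤ R)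
    (hje : R * q ≤ Q) (haQ : a + Q ≤ Q * q * q) :
    a * R + 2 ≤ Q * Q * q := by
  nlinarith [Nat.mul_le_mul_right R haQ, Nat.mul_le_mul_left (Q * q) hje]

lemma st4_L6 (q Q ah1 a1 a0 S : ℕ) (hq : 2 ≤ q) (hQ : q * q ≤ Q)
    (h1 : a1 < q) (hh : ah1 < q) (h0 : a0 < q) (hS : 1 ≤ S) (hSq : S * q ≤ Q) :
    ah1 * S + (a1 * (Q * S * q) + a0 * (Q * S)) + 2 ≤ Q * Q * q := by
  zify at *
  nlinarith [mul_nonneg (by linarith : (0:ℤ) ≤ (q:ℤ) - 1 - a1) (by positivity : (0:ℤ) ≤ (Q:ℤ) * S * q),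
    mul_nonneg (by linarith : (0:ℤ) ≤ (Q:ℤ) - S * q) (by positivity : (0:ℤ) ≤ (Q:ℤ) * q),
    mul_nonneg (by linarith : (0:ℤ) ≤ (q:ℤ) - 1 - a0) (by positivity : (0:ℤ) ≤ (Q:ℤ) * S),
    mul_nonneg (by linarith : (0:ℤ) ≤ (q:ℤ) - 1 - ah1) (by positivity : (0:ℤ) ≤ (S:ℤ)),
    mul_nonneg (by linarith : (0:ℤ) ≤ (Q:ℤ) - q * q) (by positivity : (0:ℤ) ≤ (S:ℤ)),
    mul_nonneg (by linarith : (0:ℤ) ≤ (S:ℤ) - 1) (by nlinarith : (0:ℤ) ≤ (q:ℤ) * q - q + 1),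
    mul_nonneg (by positivity : (0:ℤ) ≤ (q:ℤ)) (by linarith : (0:ℤ) ≤ (q:ℤ) - 2)]

lemma st4_L7 (q Q a1 S : ℕ) (hq : 2 ≤ q) (hQ : q * q ≤ Q) (h1 : 1 ≤ a1) (hS : q ≤ S) :
    Q * q * q ≤ a1 * (Q * S * q) := by
  calc Q * q * q = Q * q * q * 1 := (mul_one _).symm
  _ ≤ Q * S * q * a1 := by
      apply Nat.mul_le_mul _ h1
      calc Q * q * q = Q * q * q := rfl
      _ ≤ Q * S * q := by
          apply Nat.mul_le_mul_right
          exact Nat.mul_le_mul_left Q hS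
  _ = a1 * (Q * S * q) := by ring

lemma st4_L8 (q Q ah1 a1 a0 : ℕ) (hq : 2 ≤ q) (hQ : q * q ≤ Q)
    (h1 : a1 < q) (hh : ah1 < q) (h0 : a0 < q) :
    ah1 * Q + (a1 * 1 + a0 * (Q * Q)) + 2 ≤ Q * Q * q := by
  have hqQ : q ≤ Q := le_trans (Nat.le_mul_of_pos_left q (by omega)) hQ
  zify at *
  nlinarith [mul_nonneg (by linarith : (0:ℤ) ≤ (q:ℤ) - 1 - a0) (by positivity : (0:ℤ) ≤ (Q:ℤ) * Q),
    mul_nonneg (by linarith : (0:ℤ) ≤ (q:ℤ) - 1 - ah1) (by positivity : (0:ℤ) ≤ (Q:ℤ)),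
    mul_nonneg (by positivity : (0:ℤ) ≤ (Q:ℤ)) (by linarith : (0:ℤ) ≤ (Q:ℤ) - q),
    mul_nonneg (by positivity : (0:ℤ) ≤ (q:ℤ)) (by linarith : (0:ℤ) ≤ (q:ℤ) - 2)]

lemma st4_L9 (q Q ah1 a1 a0 : ℕ) (hq : 2 ≤ q) (hQ : q * q ≤ Q)
    (h0 : 1 ≤ a0) :
    Q * q * q ≤ ah1 * Q + (a1 * 1 + a0 * (Q * Q)) := by
  nlinarith

set_option maxHeartbeats 1000000 in
theorem stmt_4 (q m : ℕ) (hq : IsPrimePow q) (hm : Odd m) (hm5 : 5 ≤ m)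
    (a ah1 a1 a0 : ℕ)
    (hb1 : 1 ≤ a1) (hb1' : a1 ≤ q - 1)
    (hbh : 1 ≤ ah1) (hbh' : ah1 ≤ q - 1)
    (hb0 : 1 ≤ a0) (hb0' : a0 ≤ q - 1)
    (hd : a = ah1 * q ^ ((m - 1) / 2 + 1) + a1 * q + a0) :
    IsCosetLeader q (q ^ m - 1) a ↔ ah1 ≤ a1 := by
  have hq2 : 2 ≤ q := hq.two_le
  set h : ℕ := (m - 1) / 2 with hh
  clear_value h
  have hm2 : m = 2 * h + 1 := by
    obtain ⟨k, hk⟩ := hm; omega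
  have hh2 : 2 ≤ h := by omega
  have hq1 : 1 ≤ q := by omega
  have ha1q : a1 < q := by omega
  have hahq : ah1 < q := by omega
  have ha0q : a0 < q := by omega
  set n : ℕ := q ^ m - 1 with hn
  clear_value n
  set Q : ℕ := q ^ h with hQdef
  clear_value Q
  have hQq : q * q ≤ Q := by
    calc q * q = q ^ 2 := (sq q).symm
    _ ≤ q ^ h := Nat.pow_le_pow_right hq1 hh2
    _ = Q := hQdef.symm
  have hQ4 : 4 ≤ Q := le_trans (Nat.mul_le_mul hq2 hq2) hQq
  have hQpos : 1 ≤ Q := by omega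
  have hqm : q ^ m = Q * Q * q := by
    rw [hm2, hQdef, pow_succ, two_mul, pow_add]
  have hn1 : n + 1 = q ^ m := by
    have : 1 ≤ q ^ m := Nat.one_le_pow _ _ (by omega)
    omega
  have h32 : 32 ≤ Q * Q * q := by
    calc (32:ℕ) = 4 * 4 * 2 := by norm_num
    _ ≤ Q * Q * q := Nat.mul_le_mul (Nat.mul_le_mul hQ4 hQ4) hq2
  have hnQ : n + 1 = Q * Q * q := hn1.trans hqm
  have hnpos : 31 ≤ n := by linarith
  have hqm1 : q ^ m ≡ 1 [MOD n] := by
    show q ^ m % n = 1 % n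
    rw [← hn1, Nat.add_mod_left]
  -- a in terms of Q
  have hdQ : a = ah1 * (Q * q) + a1 * q + a0 := by
    rw [hd, hQdef, ← pow_succ]
  -- bound on a : a + Q ≤ Q*q*q
  have haQ : a + Q ≤ Q * q * q := by
    rw [hdQ]; exact st4_L1 q Q ah1 a1 a0 hq2 hQq ha1q hahq ha0q
  -- cycle lemma
  have cycle : ∀ j : ℕ, a * q ^ j % n = a * q ^ (j % m) % n := by
    intro j
    have e : a * q ^ j = (q ^ m) ^ (j / m) * (a * q ^ (j % m)) := by
      conv_lhs => rw [← Nat.div_add_mod j m]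
      rw [pow_add, pow_mul]; ring
    have hme : (q ^ m) ^ (j / m) * (a * q ^ (j % m)) ≡ 1 * (a * q ^ (j % m)) [MOD n] :=
      Nat.ModEq.mul_right _ ((hqm1.pow (j / m)).trans (by simp [Nat.ModEq]))
    rw [e]
    simp only [one_mul] at hme; exact hme
  -- key reduction
  have key : ∀ k : ℕ, a * q ^ (h + k) ≡
      ah1 * q ^ k + (a1 * q ^ (h + 1 + k) + a0 * q ^ (h + k)) [MOD n] := by
    intro k
    have e1 : a * q ^ (h + k) =
        ah1 * (q ^ m * q ^ k) + (a1 * q ^ (h + 1 + k) + a0 * q ^ (h + k)) := by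
      rw [hd, hm2]; ring
    rw [e1]
    have : ah1 * (q ^ m * q ^ k) ≡ ah1 * (1 * q ^ k) [MOD n] :=
      Nat.ModEq.mul_left _ (Nat.ModEq.mul_right _ hqm1)
    simpa using this.add_right _
  -- the special value v
  set v : ℕ := ah1 * q ^ 0 + (a1 * q ^ (h + 1 + 0) + a0 * q ^ (h + 0)) with hv
  clear_value v
  have hvQ : v = ah1 + (a1 * (Q * q) + a0 * Q) := by
    rw [hv, hQdef, ← pow_succ]; ring
  have hvn : v < n := by
    have h2 : v + 2 ≤ Q * Q * q := by
      rw [hvQ]; exact st4_L2 q Q ah1 a1 a0 hq2 hQq ha1q hahq ha0q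
    linarith
  have hvmod : a * q ^ h % n = v := by
    have hk0 : a * q ^ (h + 0) % n = v % n := by rw [hv]; exact key 0
    rw [add_zero] at hk0
    rw [hk0, Nat.mod_eq_of_lt hvn]
  constructor
  · -- leader → ah1 ≤ a1
    intro hl
    by_contra hcon
    push_neg at hcon
    have hva : v < a := by
      rw [hvQ, hdQ]; exact st4_L4 q Q ah1 a1 a0 hq2 hQq ha1q hahq ha0q hcon
    have := hl h
    rw [hvmod] at this
    omega
  · -- ah1 ≤ a1 → leader
    intro hle j
    rw [cycle j]
    have hjm : j % m < m := Nat.mod_lt _ (by omega)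
    set j' := j % m with hj'
    clear_value j'
    rcases lt_or_ge j' h with hlt | hge
    · -- small case : no wraparound
      have hje : q ^ j' * q ≤ Q := by
        rw [hQdef, ← pow_succ]
        exact Nat.pow_le_pow_right hq1 (by omega)
      have hRpos : 1 ≤ q ^ j' := Nat.one_le_pow _ _ (by omega)
      have hsm : a * q ^ j' < n := by
        have h5 := st4_L5 q Q a (q ^ j') hq2 hQq hRpos hje haQ
        linarith
      rw [Nat.mod_eq_of_lt hsm]
      exact Nat.le_mul_of_pos_right a (by omega)
    · -- wraparound cases
      obtain ⟨k, hk⟩ : ∃ k, j' = h + k := ⟨j' - h, by omega⟩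
      have hkh : k ≤ h := by omega
      rcases Nat.lt_or_ge k h with hkl | hkg
      · -- 0 ≤ k ≤ h - 1
        set w : ℕ := ah1 * q ^ k + (a1 * q ^ (h + 1 + k) + a0 * q ^ (h + k)) with hw
        clear_value w
        have hSq : q ^ k * q ≤ Q := by
          rw [hQdef, ← pow_succ]
          exact Nat.pow_le_pow_right hq1 (by omega)
        have hSpos : 1 ≤ q ^ k := Nat.one_le_pow _ _ (by omega)
        have hwQ : w = ah1 * q ^ k + (a1 * (Q * q ^ k * q) + a0 * (Q * q ^ k)) := by
          rw [hw, hQdef]; ring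
        have hwn : w < n := by
          have h6 : w + 2 ≤ Q * Q * q := by
            rw [hwQ]
            exact st4_L6 q Q ah1 a1 a0 (q ^ k) hq2 hQq ha1q hahq ha0q hSpos hSq
          linarith
        have hmod : a * q ^ j' % n = w := by
          rw [hk]
          calc a * q ^ (h + k) % n = w % n := by rw [hw]; exact key k
          _ = w := Nat.mod_eq_of_lt hwn
        rw [hmod]
        rcases Nat.eq_zero_or_pos k with hk0 | hk0
        · -- k = 0 : w = v, digit inequality
          subst hk0
          have hwv : w = v := by rw [hw, hv]
          rw [hwv, hvQ, hdQ]
          exact st4_L3 q Q ah1 a1 a0 hq2 hQq hahq hb0 hle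
        · -- k ≥ 1 : w ≥ Q*q*q > a
          have hqS : q ≤ q ^ k := by
            calc q = q ^ 1 := (pow_one q).symm
            _ ≤ q ^ k := Nat.pow_le_pow_right hq1 hk0
          have h7 := st4_L7 q Q a1 (q ^ k) hq2 hQq hb1 hqS
          have h8 : Q * q * q ≤ w := by
            rw [hwQ]
            exact le_trans h7 (le_trans (Nat.le_add_right _ _) (Nat.le_add_left _ _))
          linarith
      · -- k = h : j' = 2h
        have hkh' : k = h := by omega
        have e2 : h + 1 + h = m := by omega
        have hmod2 : a * q ^ j' ≡ ah1 * Q + (a1 * 1 + a0 * (Q * Q)) [MOD n] := by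
          rw [hk, hkh']
          refine (key h).trans ?_
          have e3 : ah1 * q ^ h + (a1 * q ^ (h + 1 + h) + a0 * q ^ (h + h)) =
              ah1 * Q + (a1 * q ^ m + a0 * (Q * Q)) := by
            rw [hQdef, ← pow_add, e2]
          rw [e3]
          exact Nat.ModEq.add_left _ (Nat.ModEq.add_right _ (Nat.ModEq.mul_left _ hqm1))
        set w : ℕ := ah1 * Q + (a1 * 1 + a0 * (Q * Q)) with hw
        clear_value w
        have hwn : w < n := by
          have h9 : w + 2 ≤ Q * Q * q := by
            rw [hw]; exact st4_L8 q Q ah1 a1 a0 hq2 hQq ha1q hahq ha0q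
          linarith
        have hmod : a * q ^ j' % n = w := by
          calc a * q ^ j' % n = w % n := hmod2
          _ = w := Nat.mod_eq_of_lt hwn
        rw [hmod]
        have h10 : Q * q * q ≤ w := by
          rw [hw]; exact st4_L9 q Q ah1 a1 a0 hq2 hQq hb0
        linarith
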